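/- In the doubled star DS_n on n vertices, every leaf has expected distance cost exactly 2n - 3, and if a leaf additionally buys k single edges to k distinct other leaves (1 ≤ k ≤ n-2), its expected distance cost becomes 2n - 3 - k + k/(2(n-1)+k). -/

import Mathlib

open scoped BigOperators ENNReal

/-- A walk of length `n` between two vertices under step relation `r`. -/
def walkLen {V : Type*} (r : V → V → Prop) : ℕ → V → V → Prop
  | 0, u, v => u = v
  | (n+1), u, v => ∃ w, r u w ∧ walkLen r n w v

/-- Adjacency in a multigraph given by a multiset of (undirected) edges. -/
def mAdj {V : Type*} (m : Multiset (Sym2 V)) (u v : V) : Prop := s(u, v) ∈ m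

/-- Hop-count distance (possibly infinite) in a multigraph. -/
noncomputable def medist {V : Type*} (m : Multiset (Sym2 V)) (u v : V) : ℕ∞ :=
  sInf ((fun n : ℕ => (n : ℕ∞)) '' {n | walkLen (mAdj m) n u v})

/-- Expected distance cost of vertex `u` under uniform random deletion of one edge. -/
noncomputable def vCost {V : Type*} [DecidableEq V] [Fintype V]
    (m : Multiset (Sym2 V)) (u : V) : ℝ :=
  (Multiset.card m : ℝ)⁻¹ *
    (m.map (fun e => ∑ v : V, ((medist (m.erase e) u v).toNat : ℝ))).sum

/-- Total expected distance cost of a multigraph. -/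
noncomputable def tCost {V : Type*} [DecidableEq V] [Fintype V]
    (m : Multiset (Sym2 V)) : ℝ := ∑ u : V, vCost m u

lemma medist_le {V : Type*} {m : Multiset (Sym2 V)} {u v : V} {k : ℕ}
    (h : walkLen (mAdj m) k u v) : medist m u v ≤ k := sInf_le ⟨k, h, rfl⟩

lemma medist_ge {V : Type*} {m : Multiset (Sym2 V)} {u v : V} {k : ℕ}
    (h : ∀ n, walkLen (mAdj m) n u v → k ≤ n) : (k : ℕ∞) ≤ medist m u v :=
  le_sInf (by rintro x ⟨n, hn, rfl⟩; exact Nat.cast_le.mpr (h n hn))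

lemma medist_self {V : Type*} (m : Multiset (Sym2 V)) (u : V) : medist m u u = 0 :=
  le_antisymm (medist_le (k := 0) rfl) (zero_le)

lemma medist_eq_one {V : Type*} {m : Multiset (Sym2 V)} {u v : V}
    (h : u ≠ v) (ha : mAdj m u v) : medist m u v = 1 := by
  refine le_antisymm (medist_le (k := 1) ⟨v, ha, rfl⟩) (medist_ge fun n hn => ?_)
  cases n with
  | zero => exact absurd hn h
  | succ n => omega

lemma medist_eq_two {V : Type*} {m : Multiset (Sym2 V)} {u v w : V}
    (h : u ≠ v) (hna : ¬ mAdj m u v) (h1 : mAdj m u w) (h2 : mAdj m w v) :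
    medist m u v = 2 := by
  refine le_antisymm (medist_le (k := 2) ⟨w, h1, v, h2, rfl⟩) (medist_ge fun n hn => ?_)
  match n, hn with
  | 0, hn => exact absurd hn h
  | 1, ⟨x, hx, hxv⟩ => exact absurd (hxv ▸ hx) hna
  | (n+2), _ => exact Nat.le_add_left 2 n

section Star
variable {n : ℕ} {c l : Fin n} {S : Finset (Fin n)} {m' : Multiset (Sym2 (Fin n))}

lemma count_m' (hl : l ≠ c) (hcS : c ∉ S)
    (h2 : ∀ v : Fin n, v ≠ c → m'.count s(c, v) = 2)
    (hcc : m'.count s(c, c) = 0)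
    (h1 : ∀ v ∈ S, m'.count s(l, v) = 1)
    (h0 : ∀ v w : Fin n, v ≠ c → w ≠ c → ¬(v = l ∧ w ∈ S) → ¬(w = l ∧ v ∈ S) →
      m'.count s(v, w) = 0)
    (u v : Fin n) : m'.count s(u, v) =
    if (u = c ∧ v ≠ c) ∨ (v = c ∧ u ≠ c) then 2
    else if (u = l ∧ v ∈ S) ∨ (v = l ∧ u ∈ S) then 1 else 0 := by
  by_cases huc : u = c
  · by_cases hvc : v = c
    · rw [huc, hvc, hcc]
      simp [Ne.symm hl, hcS]
    · rw [huc, if_pos (Or.inl ⟨rfl, hvc⟩)]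
      exact h2 v hvc
  · by_cases hvc : v = c
    · rw [hvc, Sym2.eq_swap, if_pos (Or.inr ⟨rfl, huc⟩)]
      exact h2 u huc
    · rw [if_neg (by rintro (⟨h, _⟩ | ⟨h, _⟩) <;> [exact huc h; exact hvc h])]
      by_cases hA : u = l ∧ v ∈ S
      · obtain ⟨hul, hv⟩ := hA
        rw [hul, if_pos (Or.inl ⟨rfl, hv⟩)]
        exact h1 v hv
      · by_cases hB : v = l ∧ u ∈ S
        · rw [hB.1, Sym2.eq_swap, if_pos (Or.inr ⟨rfl, hB.2⟩)]
          exact h1 u hB.2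
        · rw [if_neg (by rintro (h | h) <;> [exact hA h; exact hB h])]
          exact h0 u v huc hvc hA hB

lemma sum_dist {T : Finset (Fin n)} {μ : Multiset (Sym2 (Fin n))}
    (hl : l ≠ c) (hcT : c ∉ T) (hlT : l ∉ T)
    (hadj : ∀ u v : Fin n, mAdj μ u v ↔
      ((u = c ∧ v ≠ c) ∨ (v = c ∧ u ≠ c) ∨ (u = l ∧ v ∈ T) ∨ (v = l ∧ u ∈ T))) :
    ∑ v : Fin n, ((medist μ l v).toNat : ℝ) = 2 * n - 3 - T.card := by
  have key : ∀ v : Fin n, ((medist μ l v).toNat : ℝ) =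
      2 - (if v = l then 2 else 0) - (if v = c then 1 else 0) -
        (if v ∈ T then 1 else 0) := by
    intro v
    by_cases hvl : v = l
    · subst hvl
      rw [medist_self]
      simp [hl, hlT]
    · by_cases hvc : v = c
      · subst hvc
        rw [medist_eq_one hl ((hadj l v).mpr (Or.inr (Or.inl ⟨rfl, hl⟩)))]
        simp [hl, hcT, hvl]; norm_num
      · by_cases hvT : v ∈ T
        · rw [medist_eq_one (fun h => hvl h.symm) ((hadj l v).mpr (Or.inr (Or.inr (Or.inl ⟨rfl, hvT⟩))))]
          simp [hvl, hvc, hvT]; norm_num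
        · rw [medist_eq_two (fun h => hvl h.symm)
            (by rw [hadj]; rintro (⟨h, _⟩ | ⟨h, _⟩ | ⟨_, h⟩ | ⟨h, _⟩) <;>
              [exact hl h; exact hvc h; exact hvT h; exact hvl h])
            ((hadj l c).mpr (Or.inr (Or.inl ⟨rfl, hl⟩)))
            ((hadj c v).mpr (Or.inl ⟨rfl, hvc⟩))]
          simp [hvl, hvc, hvT]
  rw [Finset.sum_congr rfl (fun v _ => key v)]
  rw [Finset.sum_sub_distrib, Finset.sum_sub_distrib, Finset.sum_sub_distrib]
  rw [Finset.sum_ite_eq' Finset.univ l (fun _ => (2:ℝ)),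
    Finset.sum_ite_eq' Finset.univ c (fun _ => (1:ℝ))]
  have hT : (∑ v : Fin n, if v ∈ T then (1:ℝ) else 0) = T.card := by
    rw [Finset.sum_ite_mem, Finset.univ_inter, Finset.sum_const, nsmul_eq_mul, mul_one]
  rw [hT]
  simp [Finset.card_univ, mul_comm]
  ring

lemma count_X (u v : Fin n) :
    Multiset.count s(u, v) ((Finset.univ.erase c).val.map fun x => s(c, x)) =
    if (u = c ∧ v ≠ c) ∨ (v = c ∧ u ≠ c) then 1 else 0 := by
  have hinj : Function.Injective (fun x : Fin n => s(c, x)) :=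
    fun a b h => Sym2.congr_right.mp h
  have hone : ∀ w : Fin n, w ≠ c →
      Multiset.count s(c, w) ((Finset.univ.erase c).val.map fun x => s(c, x)) = 1 := by
    intro w hw
    rw [Multiset.count_map_eq_count' _ _ hinj]
    exact Multiset.count_eq_one_of_mem (Finset.univ.erase c).nodup (by simp [Multiset.mem_erase_of_ne hw])
  by_cases hA : u = c ∧ v ≠ c
  · rw [if_pos (Or.inl hA), hA.1]
    exact hone v hA.2
  · by_cases hB : v = c ∧ u ≠ c
    · rw [if_pos (Or.inr hB), hB.1, Sym2.eq_swap]
      exact hone u hB.2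
    · rw [if_neg (by rintro (h | h) <;> [exact hA h; exact hB h])]
      rw [Multiset.count_eq_zero]
      intro hmem
      obtain ⟨x, hx, hfx⟩ := Multiset.mem_map.mp hmem
      have hxc : x ≠ c := (Finset.mem_erase.mp (Finset.mem_val.mp hx)).1
      rw [Sym2.eq_iff] at hfx
      rcases hfx with ⟨h1, h2⟩ | ⟨h1, h2⟩
      · exact hA ⟨h1.symm, by rw [← h2]; exact hxc⟩
      · exact hB ⟨h1.symm, by rw [← h2]; exact hxc⟩

lemma count_Y (u v : Fin n) :
    Multiset.count s(u, v) (S.val.map fun x => s(l, x)) =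
    if (u = l ∧ v ∈ S) ∨ (v = l ∧ u ∈ S) then 1 else 0 := by
  have hinj : Function.Injective (fun x : Fin n => s(l, x)) :=
    fun a b h => Sym2.congr_right.mp h
  have hone : ∀ w ∈ S,
      Multiset.count s(l, w) (S.val.map fun x => s(l, x)) = 1 := by
    intro w hw
    rw [Multiset.count_map_eq_count' _ _ hinj]
    exact Multiset.count_eq_one_of_mem S.nodup hw
  by_cases hA : u = l ∧ v ∈ S
  · rw [if_pos (Or.inl hA), hA.1]
    exact hone v hA.2
  · by_cases hB : v = l ∧ u ∈ S
    · rw [if_pos (Or.inr hB), hB.1, Sym2.eq_swap]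
      exact hone u hB.2
    · rw [if_neg (by rintro (h | h) <;> [exact hA h; exact hB h])]
      rw [Multiset.count_eq_zero]
      intro hmem
      obtain ⟨x, hx, hfx⟩ := Multiset.mem_map.mp hmem
      rw [Sym2.eq_iff] at hfx
      rcases hfx with ⟨h1, h2⟩ | ⟨h1, h2⟩
      · exact hA ⟨h1.symm, h2 ▸ hx⟩
      · exact hB ⟨h1.symm, h2 ▸ hx⟩

lemma decomp (hl : l ≠ c) (hcS : c ∉ S)
    (h2 : ∀ v : Fin n, v ≠ c → m'.count s(c, v) = 2)
    (hcc : m'.count s(c, c) = 0)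
    (h1 : ∀ v ∈ S, m'.count s(l, v) = 1)
    (h0 : ∀ v w : Fin n, v ≠ c → w ≠ c → ¬(v = l ∧ w ∈ S) → ¬(w = l ∧ v ∈ S) →
      m'.count s(v, w) = 0) :
    m' = ((Finset.univ.erase c).val.map fun x => s(c, x)) +
         ((Finset.univ.erase c).val.map fun x => s(c, x)) +
         (S.val.map fun x => s(l, x)) := by
  ext a
  induction a using Sym2.ind with
  | _ u v =>
    rw [Multiset.count_add, Multiset.count_add, count_m' hl hcS h2 hcc h1 h0 u v,
      count_X, count_Y (l := l)]
    have hdisj : ¬(((u = c ∧ v ≠ c) ∨ (v = c ∧ u ≠ c)) ∧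
        ((u = l ∧ v ∈ S) ∨ (v = l ∧ u ∈ S))) := by
      rintro ⟨hA | hA, hB | hB⟩
      · exact hl (hB.1.symm.trans hA.1)
      · exact hcS (hA.1 ▸ hB.2)
      · exact hcS (hA.1 ▸ hB.2)
      · exact hl (hB.1.symm.trans hA.1)
    split_ifs with hA hB
    · exact absurd ⟨hA, hB⟩ hdisj
    · rfl
    · rfl
    · rfl

lemma master (hn : 2 ≤ n) (hl : l ≠ c) (hcS : c ∉ S) (hlS : l ∉ S)
    (h2 : ∀ v : Fin n, v ≠ c → m'.count s(c, v) = 2)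
    (hcc : m'.count s(c, c) = 0)
    (h1 : ∀ v ∈ S, m'.count s(l, v) = 1)
    (h0 : ∀ v w : Fin n, v ≠ c → w ≠ c → ¬(v = l ∧ w ∈ S) → ¬(w = l ∧ v ∈ S) →
      m'.count s(v, w) = 0) :
    vCost m' l = 2 * (n:ℝ) - 3 - S.card + (S.card : ℝ) / (2 * ((n:ℝ) - 1) + S.card) := by
  -- adjacency of m' after erasing a center edge
  have hadjX : ∀ v₀ : Fin n, v₀ ≠ c → ∀ u v : Fin n,
      mAdj (m'.erase s(c, v₀)) u v ↔
      ((u = c ∧ v ≠ c) ∨ (v = c ∧ u ≠ c) ∨ (u = l ∧ v ∈ S) ∨ (v = l ∧ u ∈ S)) := by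
    intro v₀ h₀ u v
    rw [mAdj, ← Multiset.count_pos]
    by_cases he : s(u, v) = s(c, v₀)
    · refine iff_of_true ?_ ?_
      · rw [he, Multiset.count_erase_self, h2 v₀ h₀]; norm_num
      · rw [Sym2.eq_iff] at he
        rcases he with ⟨e1, e2⟩ | ⟨e1, e2⟩
        · exact Or.inl ⟨e1, e2 ▸ h₀⟩
        · exact Or.inr (Or.inl ⟨e2, e1 ▸ h₀⟩)
    · rw [Multiset.count_erase_of_ne he, count_m' hl hcS h2 hcc h1 h0 u v]
      split_ifs with hA hB
      · exact iff_of_true (by norm_num) (by tauto)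
      · exact iff_of_true (by norm_num) (by tauto)
      · exact iff_of_false (by norm_num) (by tauto)
  -- adjacency of m' after erasing a bought edge
  have hadjY : ∀ v₀ ∈ S, ∀ u v : Fin n,
      mAdj (m'.erase s(l, v₀)) u v ↔
      ((u = c ∧ v ≠ c) ∨ (v = c ∧ u ≠ c) ∨ (u = l ∧ v ∈ S.erase v₀) ∨
        (v = l ∧ u ∈ S.erase v₀)) := by
    intro v₀ h₀ u v
    have hv₀c : v₀ ≠ c := fun h => hcS (h ▸ h₀)
    have hv₀l : v₀ ≠ l := fun h => hlS (h ▸ h₀)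
    rw [mAdj, ← Multiset.count_pos]
    by_cases he : s(u, v) = s(l, v₀)
    · refine iff_of_false ?_ ?_
      · rw [he, Multiset.count_erase_self, h1 v₀ h₀]; norm_num
      · rw [Sym2.eq_iff] at he
        rcases he with ⟨e1, e2⟩ | ⟨e1, e2⟩
        · rintro (⟨f1, -⟩ | ⟨f1, -⟩ | ⟨-, f2⟩ | ⟨f1, -⟩)
          · exact hl (e1.symm.trans f1)
          · exact hv₀c (e2.symm.trans f1)
          · exact (Finset.mem_erase.mp (e2 ▸ f2)).1 rfl
          · exact hv₀l (e2.symm.trans f1)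
        · rintro (⟨f1, -⟩ | ⟨f1, -⟩ | ⟨f1, -⟩ | ⟨-, f2⟩)
          · exact hv₀c (e1.symm.trans f1)
          · exact hl (e2.symm.trans f1)
          · exact hv₀l (e1.symm.trans f1)
          · exact (Finset.mem_erase.mp (e1 ▸ f2)).1 rfl
    · rw [Multiset.count_erase_of_ne he, count_m' hl hcS h2 hcc h1 h0 u v]
      split_ifs with hA hB
      · exact iff_of_true (by norm_num) (by tauto)
      · refine iff_of_true (by norm_num) ?_
        rcases hB with ⟨f1, f2⟩ | ⟨f1, f2⟩
        · refine Or.inr (Or.inr (Or.inl ⟨f1, Finset.mem_erase.mpr ⟨?_, f2⟩⟩))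
          intro h
          exact he (by rw [f1, h])
        · refine Or.inr (Or.inr (Or.inr ⟨f1, Finset.mem_erase.mpr ⟨?_, f2⟩⟩))
          intro h
          exact he (by rw [f1, h, Sym2.eq_swap])
      · refine iff_of_false (by norm_num) ?_
        rintro (h | h | ⟨f1, f2⟩ | ⟨f1, f2⟩)
        · exact hA (Or.inl h)
        · exact hA (Or.inr h)
        · exact hB (Or.inl ⟨f1, (Finset.mem_erase.mp f2).2⟩)
        · exact hB (Or.inr ⟨f1, (Finset.mem_erase.mp f2).2⟩)
  have hd := decomp hl hcS h2 hcc h1 h0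
  subst hd
  set X : Multiset (Sym2 (Fin n)) := (Finset.univ.erase c).val.map fun x => s(c, x) with hX
  set Y : Multiset (Sym2 (Fin n)) := S.val.map fun x => s(l, x) with hY
  set g : Sym2 (Fin n) → ℝ :=
    fun e => ∑ v : Fin n, ((medist ((X + X + Y).erase e) l v).toNat : ℝ) with hg
  have hcard1 : Multiset.card (Finset.univ.erase c).val = n - 1 := by
    rw [show Multiset.card (Finset.univ.erase c).val = (Finset.univ.erase c).card from rfl,
      Finset.card_erase_of_mem (Finset.mem_univ c), Finset.card_univ, Fintype.card_fin]
  have hXg : X.map g = Multiset.replicate (n - 1) (2 * (n:ℝ) - 3 - S.card) := by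
    rw [hX, Multiset.map_map,
      Multiset.map_congr rfl (fun x hx => ?_), Multiset.map_const', hcard1]
    have hxc : x ≠ c := (Finset.mem_erase.mp (Finset.mem_val.mp hx)).1
    exact sum_dist hl hcS hlS (hadjX x hxc)
  have hYg : Y.map g = Multiset.replicate S.card (2 * (n:ℝ) - 2 - S.card) := by
    rw [hY, Multiset.map_map,
      Multiset.map_congr rfl (fun x hx => ?_), Multiset.map_const',
      show Multiset.card S.val = S.card from rfl]
    have hx' : x ∈ S := hx
    have hs := sum_dist (μ := (X + X + Y).erase s(l, x)) (T := S.erase x) hl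
      (fun h => hcS (Finset.mem_erase.mp h).2) (fun h => hlS (Finset.mem_erase.mp h).2)
      (hadjY x hx')
    have hk1 : 1 ≤ S.card := Finset.card_pos.mpr ⟨x, hx'⟩
    show g s(l, x) = _
    simp only [hg]
    rw [hs, Finset.card_erase_of_mem hx']
    push_cast [Nat.cast_sub hk1]
    ring
  have hk0 : (0:ℝ) ≤ S.card := Nat.cast_nonneg _
  have h2n : (2:ℝ) ≤ n := by exact_mod_cast hn
  have hM : (0:ℝ) < 2 * ((n:ℝ) - 1) + S.card := by linarith
  have hcard : (Multiset.card (X + X + Y) : ℝ) = 2 * ((n:ℝ) - 1) + S.card := by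
    rw [Multiset.card_add, Multiset.card_add, hX, hY, Multiset.card_map, Multiset.card_map,
      hcard1, show Multiset.card S.val = S.card from rfl]
    push_cast [Nat.cast_sub (by omega : 1 ≤ n)]
    ring
  rw [vCost, ← hg, Multiset.map_add, Multiset.map_add, Multiset.sum_add, Multiset.sum_add,
    hXg, hYg, Multiset.sum_replicate, Multiset.sum_replicate, hcard, nsmul_eq_mul, nsmul_eq_mul]
  push_cast [Nat.cast_sub (by omega : 1 ≤ n)]
  field_simp
  ring
end Star

/-- In the doubled star `DS_n` (center `c` joined to each of the `n-1` leaves by two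
parallel edges), every leaf has expected distance cost exactly `2n - 3`; and if a leaf
`l` additionally buys `k` single edges to `k` distinct other leaves (`1 ≤ k ≤ n - 2`),
its expected distance cost becomes `2n - 3 - k + k/(2(n-1)+k)`. -/
theorem vCost_doubledStar {n : ℕ} (hn : 2 ≤ n) (c : Fin n)
    (m : Multiset (Sym2 (Fin n)))
    (hm2 : ∀ v : Fin n, v ≠ c → m.count s(c, v) = 2)
    (hm0 : ∀ v w : Fin n, v ≠ c → w ≠ c → m.count s(v, w) = 0)
    (hmc : m.count s(c, c) = 0) :
    (∀ l : Fin n, l ≠ c → vCost m l = 2 * (n : ℝ) - 3) ∧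
    (∀ (l : Fin n) (k : ℕ) (S : Finset (Fin n)) (m' : Multiset (Sym2 (Fin n))),
      l ≠ c → c ∉ S → l ∉ S → S.card = k → 1 ≤ k → k ≤ n - 2 →
      (∀ v : Fin n, v ≠ c → m'.count s(c, v) = 2) →
      m'.count s(c, c) = 0 →
      (∀ v ∈ S, m'.count s(l, v) = 1) →
      (∀ v w : Fin n, v ≠ c → w ≠ c → ¬(v = l ∧ w ∈ S) → ¬(w = l ∧ v ∈ S) →
        m'.count s(v, w) = 0) →
      vCost m' l = 2 * (n : ℝ) - 3 - k + (k : ℝ) / (2 * ((n : ℝ) - 1) + k)) := by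
  constructor
  · intro l hl
    have h := master hn hl (Finset.notMem_empty c) (Finset.notMem_empty l) hm2 hmc
      (fun v hv => absurd hv (Finset.notMem_empty v))
      (fun v w hv hw _ _ => hm0 v w hv hw)
    simpa using h
  · intro l k S m' hl hcS hlS hSk hk1 hk2 h2 hcc h1 h0
    subst hSk
    exact master hn hl hcS hlS h2 hcc h1 h0
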